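/- Let v1, v2, y, z1 be jointly distributed random variables with I(y; z1 | v1, v2) = 0 and I(y; v1 | v2) = 0. Then I(y; z1) ≥ I(y; v2) − I(v1; v2 | z1) − I(y; v2 | v1). -/

import Mathlib

open scoped BigOperators

/-- Conditional mutual information I(X;Y|Z) for a finite probability space
given by a pmf `p` on `Ω`. -/
noncomputable def condMI {Ω A B C : Type} [Fintype Ω] [Fintype A] [Fintype B] [Fintype C]
    [DecidableEq A] [DecidableEq B] [DecidableEq C]
    (p : Ω → ℝ) (X : Ω → A) (Y : Ω → B) (Z : Ω → C) : ℝ :=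
  ∑ a : A, ∑ b : B, ∑ c : C,
    (∑ ω : Ω, if X ω = a ∧ Y ω = b ∧ Z ω = c then p ω else 0) *
      Real.log
        ((∑ ω : Ω, if X ω = a ∧ Y ω = b ∧ Z ω = c then p ω else 0) *
            (∑ ω : Ω, if Z ω = c then p ω else 0) /
          ((∑ ω : Ω, if X ω = a ∧ Z ω = c then p ω else 0) *
            (∑ ω : Ω, if Y ω = b ∧ Z ω = c then p ω else 0)))

/-- Mutual information I(X;Y) as conditional mutual information given a constant. -/
noncomputable def mi {Ω A B : Type} [Fintype Ω] [Fintype A] [Fintype B]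
    [DecidableEq A] [DecidableEq B] (p : Ω → ℝ) (X : Ω → A) (Y : Ω → B) : ℝ :=
  condMI p X Y (fun _ => ())

noncomputable def pr {Ω : Type} [Fintype Ω] (p : Ω → ℝ) (P : Ω → Prop) [DecidablePred P] : ℝ :=
  ∑ ω : Ω, if P ω then p ω else 0
lemma condMI_pr {Ω A B C : Type} [Fintype Ω] [Fintype A] [Fintype B] [Fintype C]
    [DecidableEq A] [DecidableEq B] [DecidableEq C]
    (p : Ω → ℝ) (X : Ω → A) (Y : Ω → B) (Z : Ω → C) :
    condMI p X Y Z = ∑ a : A, ∑ b : B, ∑ c : C,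
      pr p (fun ω => X ω = a ∧ Y ω = b ∧ Z ω = c) *
        Real.log (pr p (fun ω => X ω = a ∧ Y ω = b ∧ Z ω = c) * pr p (fun ω => Z ω = c) /
          (pr p (fun ω => X ω = a ∧ Z ω = c) * pr p (fun ω => Y ω = b ∧ Z ω = c))) := rfl
section basic
variable {Ω : Type} [Fintype Ω] {p : Ω → ℝ}
lemma pr_nonneg (hp : ∀ ω, 0 ≤ p ω) (P : Ω → Prop) [DecidablePred P] : 0 ≤ pr p P := by
  unfold pr; exact Finset.sum_nonneg fun ω _ => by split <;> simp [hp ω]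
lemma pr_mono (hp : ∀ ω, 0 ≤ p ω) {P Q : Ω → Prop} [DecidablePred P] [DecidablePred Q]
    (h : ∀ ω, P ω → Q ω) : pr p P ≤ pr p Q := by
  unfold pr
  refine Finset.sum_le_sum fun ω _ => ?_
  by_cases hP : P ω
  · simp [hP, h ω hP]
  · simp only [if_neg hP]; split <;> simp [hp ω]
lemma pr_congr {P Q : Ω → Prop} [DecidablePred P] [DecidablePred Q]
    (h : ∀ ω, P ω ↔ Q ω) : pr p P = pr p Q :=
  Finset.sum_congr rfl fun ω _ => if_congr (h ω) rfl rfl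
lemma pr_eq_zero {P : Ω → Prop} [DecidablePred P] (h : ∀ ω, ¬ P ω) : pr p P = 0 := by
  unfold pr; simp [h]
lemma pr_sum {τ : Type} [Fintype τ] [DecidableEq τ] (T : Ω → τ) (P : Ω → Prop)
    [DecidablePred P] :
    ∑ t : τ, pr p (fun ω => P ω ∧ T ω = t) = pr p P := by
  unfold pr
  rw [Finset.sum_comm]
  refine Finset.sum_congr rfl fun ω _ => ?_
  by_cases hP : P ω <;> simp [hP]
end basic
lemma kl_nonneg {ι : Type} [Fintype ι] (f g : ι → ℝ) (hf : ∀ i, 0 ≤ f i) (hg : ∀ i, 0 ≤ g i)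
    (hfg : ∀ i, 0 < f i → 0 < g i) (hsum : ∑ i : ι, g i ≤ ∑ i : ι, f i) :
    0 ≤ ∑ i : ι, f i * Real.log (f i / g i) := by
  have key : ∀ i : ι, f i - g i ≤ f i * Real.log (f i / g i) := by
    intro i
    rcases (hf i).eq_or_lt with h | h
    · simp [← h, hg i]
    · have hgi := hfg i h
      have hlog := Real.log_le_sub_one_of_pos (x := g i / f i) (by positivity)
      have hinv : Real.log (f i / g i) = - Real.log (g i / f i) := by
        rw [← Real.log_inv]; congr 1; field_simp
      nlinarith [mul_le_mul_of_nonneg_left hlog (le_of_lt h),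
        mul_div_cancel₀ (g i) (ne_of_gt h)]
  calc (0:ℝ) = ∑ i : ι, f i - ∑ i : ι, g i + (∑ i : ι, g i - ∑ i : ι, f i) := by ring
  _ ≤ ∑ i : ι, f i - ∑ i : ι, g i := by linarith
  _ = ∑ i : ι, (f i - g i) := by rw [Finset.sum_sub_distrib]
  _ ≤ _ := Finset.sum_le_sum fun i _ => key i

section nonneg
variable {Ω A B C : Type} [Fintype Ω] [Fintype A] [Fintype B] [Fintype C]
    [DecidableEq A] [DecidableEq B] [DecidableEq C] {p : Ω → ℝ}

lemma sum_rotate {A B C : Type} [Fintype A] [Fintype B] [Fintype C] (h : A → B → C → ℝ) :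
    (∑ a : A, ∑ b : B, ∑ c : C, h a b c) = ∑ c : C, ∑ a : A, ∑ b : B, h a b c :=
  (Finset.sum_congr rfl fun _ _ => Finset.sum_comm).trans Finset.sum_comm

section nonneg
variable {Ω A B C : Type} [Fintype Ω] [Fintype A] [Fintype B] [Fintype C]
    [DecidableEq A] [DecidableEq B] [DecidableEq C] {p : Ω → ℝ}

lemma condMI_nonneg (hp : ∀ ω, 0 ≤ p ω) (X : Ω → A) (Y : Ω → B) (Z : Ω → C) :
    0 ≤ condMI p X Y Z := by
  classical
  rw [condMI_pr]
  set f : A × B × C → ℝ := fun t => pr p (fun ω => X ω = t.1 ∧ Y ω = t.2.1 ∧ Z ω = t.2.2) with hf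
  set g : A × B × C → ℝ := fun t =>
    pr p (fun ω => X ω = t.1 ∧ Z ω = t.2.2) * pr p (fun ω => Y ω = t.2.1 ∧ Z ω = t.2.2) /
      pr p (fun ω => Z ω = t.2.2) with hg
  have hfnn : ∀ t, 0 ≤ f t := fun t => pr_nonneg hp _
  have hgnn : ∀ t, 0 ≤ g t := fun t => by
    have h1 := pr_nonneg (p := p) hp (fun ω => X ω = t.1 ∧ Z ω = t.2.2)
    have h2 := pr_nonneg (p := p) hp (fun ω => Y ω = t.2.1 ∧ Z ω = t.2.2)
    have h3 := pr_nonneg (p := p) hp (fun ω => Z ω = t.2.2)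
    rw [hg]; positivity
  have hmono : ∀ t : A × B × C, 0 < f t →
      0 < pr p (fun ω => X ω = t.1 ∧ Z ω = t.2.2) ∧
      0 < pr p (fun ω => Y ω = t.2.1 ∧ Z ω = t.2.2) ∧
      0 < pr p (fun ω => Z ω = t.2.2) := by
    intro t ht
    rw [hf] at ht
    exact ⟨lt_of_lt_of_le ht (pr_mono hp fun ω h => ⟨h.1, h.2.2⟩),
      lt_of_lt_of_le ht (pr_mono hp fun ω h => ⟨h.2.1, h.2.2⟩),
      lt_of_lt_of_le ht (pr_mono hp fun ω h => h.2.2)⟩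
  have hfg : ∀ t, 0 < f t → 0 < g t := by
    intro t ht
    obtain ⟨h1, h2, h3⟩ := hmono t ht
    rw [hg]; positivity
  have hsumf : ∀ c : C, (∑ a : A, ∑ b : B, f (a, b, c)) = pr p (fun ω => Z ω = c) := by
    intro c
    have step : ∀ a : A, (∑ b : B, f (a, b, c)) = pr p (fun ω => X ω = a ∧ Z ω = c) := by
      intro a
      have h0 := pr_sum (p := p) Y (fun ω => X ω = a ∧ Z ω = c)
      rw [← h0]
      exact Finset.sum_congr rfl fun b _ => pr_congr fun ω => by tauto
    rw [Finset.sum_congr rfl fun a _ => step a]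
    have h0 := pr_sum (p := p) X (fun ω => Z ω = c)
    rw [← h0]
    exact Finset.sum_congr rfl fun a _ => pr_congr fun ω => by tauto
  have hsumXc : ∀ c : C, (∑ a : A, pr p (fun ω => X ω = a ∧ Z ω = c)) = pr p (fun ω => Z ω = c) := by
    intro c
    have h0 := pr_sum (p := p) X (fun ω => Z ω = c)
    rw [← h0]
    exact Finset.sum_congr rfl fun a _ => pr_congr fun ω => by tauto
  have hsumYc : ∀ c : C, (∑ b : B, pr p (fun ω => Y ω = b ∧ Z ω = c)) = pr p (fun ω => Z ω = c) := by
    intro c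
    have h0 := pr_sum (p := p) Y (fun ω => Z ω = c)
    rw [← h0]
    exact Finset.sum_congr rfl fun b _ => pr_congr fun ω => by tauto
  have hsum : ∑ t : A × B × C, g t ≤ ∑ t : A × B × C, f t := by
    rw [Fintype.sum_prod_type, Fintype.sum_prod_type]
    simp only [Fintype.sum_prod_type]
    rw [sum_rotate (fun a b c => g (a, b, c)), sum_rotate (fun a b c => f (a, b, c))]
    refine Finset.sum_le_sum fun c _ => ?_
    rw [hsumf c]
    have hg2 : (∑ a : A, ∑ b : B, g (a, b, c)) =
        (∑ a : A, pr p (fun ω => X ω = a ∧ Z ω = c)) *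
          (∑ b : B, pr p (fun ω => Y ω = b ∧ Z ω = c)) / pr p (fun ω => Z ω = c) := by
      rw [Finset.sum_mul, Finset.sum_div]
      refine Finset.sum_congr rfl fun a _ => ?_
      rw [Finset.mul_sum, Finset.sum_div]
    rw [hg2, hsumXc c, hsumYc c]
    rcases (pr_nonneg (p := p) hp (fun ω => Z ω = c)).eq_or_lt with h | h
    · rw [← h]; simp
    · rw [mul_div_assoc, div_self (ne_of_gt h), mul_one]
  have hkl := kl_nonneg f g hfnn hgnn hfg hsum
  have key : ∀ t : A × B × C, f t * Real.log (f t / g t) =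
      f t * Real.log (f t * pr p (fun ω => Z ω = t.2.2) /
        (pr p (fun ω => X ω = t.1 ∧ Z ω = t.2.2) * pr p (fun ω => Y ω = t.2.1 ∧ Z ω = t.2.2))) := by
    intro t
    rcases (hfnn t).eq_or_lt with h | h
    · rw [← h, zero_mul, zero_mul]
    · congr 1
      rw [hg, div_div_eq_mul_div]
  refine le_trans hkl (le_of_eq ?_)
  rw [Fintype.sum_prod_type]
  simp only [Fintype.sum_prod_type]
  refine Finset.sum_congr rfl fun a _ => Finset.sum_congr rfl fun b _ =>
    Finset.sum_congr rfl fun c _ => ?_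
  exact key (a, b, c)

end nonneg

section chain
variable {Ω A B1 B2 C : Type} [Fintype Ω] [Fintype A] [Fintype B1] [Fintype B2] [Fintype C]
    [DecidableEq A] [DecidableEq B1] [DecidableEq B2] [DecidableEq C] {p : Ω → ℝ}

lemma condMI_chain (hp : ∀ ω, 0 ≤ p ω) (X : Ω → A) (Y1 : Ω → B1) (Y2 : Ω → B2) (Z : Ω → C) :
    condMI p X (fun ω => (Y1 ω, Y2 ω)) Z
      = condMI p X Y1 Z + condMI p X Y2 (fun ω => (Y1 ω, Z ω)) := by
  classical
  rw [condMI_pr, condMI_pr, condMI_pr]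
  set q : A → B1 → B2 → C → ℝ := fun a b1 b2 c =>
    pr p (fun ω => X ω = a ∧ Y1 ω = b1 ∧ Y2 ω = b2 ∧ Z ω = c) with hq
  -- LHS flattened
  have eL : (∑ a : A, ∑ b : B1 × B2, ∑ c : C,
      pr p (fun ω => X ω = a ∧ (Y1 ω, Y2 ω) = b ∧ Z ω = c) *
        Real.log (pr p (fun ω => X ω = a ∧ (Y1 ω, Y2 ω) = b ∧ Z ω = c) * pr p (fun ω => Z ω = c) /
          (pr p (fun ω => X ω = a ∧ Z ω = c) * pr p (fun ω => (Y1 ω, Y2 ω) = b ∧ Z ω = c))))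
      = ∑ a : A, ∑ b1 : B1, ∑ b2 : B2, ∑ c : C,
        q a b1 b2 c *
          Real.log (q a b1 b2 c * pr p (fun ω => Z ω = c) /
            (pr p (fun ω => X ω = a ∧ Z ω = c) *
              pr p (fun ω => (Y1 ω = b1 ∧ Y2 ω = b2) ∧ Z ω = c))) := by
    refine Finset.sum_congr rfl fun a _ => ?_
    rw [Fintype.sum_prod_type]
    refine Finset.sum_congr rfl fun b1 _ => Finset.sum_congr rfl fun b2 _ =>
      Finset.sum_congr rfl fun c _ => ?_
    rw [hq]
    rw [pr_congr (P := fun ω => X ω = a ∧ (Y1 ω, Y2 ω) = (b1, b2) ∧ Z ω = c)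
        (Q := fun ω => X ω = a ∧ Y1 ω = b1 ∧ Y2 ω = b2 ∧ Z ω = c)
        (fun ω => by simp only [Prod.mk.injEq]; try tauto),
      pr_congr (P := fun ω => (Y1 ω, Y2 ω) = (b1, b2) ∧ Z ω = c)
        (Q := fun ω => (Y1 ω = b1 ∧ Y2 ω = b2) ∧ Z ω = c)
        (fun ω => by simp only [Prod.mk.injEq]; try tauto)]
  rw [eL]
  -- RHS first term
  have e1 : (∑ a : A, ∑ b1 : B1, ∑ c : C,
      pr p (fun ω => X ω = a ∧ Y1 ω = b1 ∧ Z ω = c) *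
        Real.log (pr p (fun ω => X ω = a ∧ Y1 ω = b1 ∧ Z ω = c) * pr p (fun ω => Z ω = c) /
          (pr p (fun ω => X ω = a ∧ Z ω = c) * pr p (fun ω => Y1 ω = b1 ∧ Z ω = c))))
      = ∑ a : A, ∑ b1 : B1, ∑ b2 : B2, ∑ c : C,
        q a b1 b2 c *
          Real.log (pr p (fun ω => X ω = a ∧ Y1 ω = b1 ∧ Z ω = c) * pr p (fun ω => Z ω = c) /
            (pr p (fun ω => X ω = a ∧ Z ω = c) * pr p (fun ω => Y1 ω = b1 ∧ Z ω = c))) := by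
    refine Finset.sum_congr rfl fun a _ => Finset.sum_congr rfl fun b1 _ => ?_
    have hexp : ∀ c : C, pr p (fun ω => X ω = a ∧ Y1 ω = b1 ∧ Z ω = c)
        = ∑ b2 : B2, q a b1 b2 c := by
      intro c
      rw [← pr_sum (p := p) Y2 (fun ω => X ω = a ∧ Y1 ω = b1 ∧ Z ω = c)]
      exact Finset.sum_congr rfl fun b2 _ => pr_congr fun ω => by tauto
    calc (∑ c : C,
        pr p (fun ω => X ω = a ∧ Y1 ω = b1 ∧ Z ω = c) *
          Real.log (pr p (fun ω => X ω = a ∧ Y1 ω = b1 ∧ Z ω = c) * pr p (fun ω => Z ω = c) /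
            (pr p (fun ω => X ω = a ∧ Z ω = c) * pr p (fun ω => Y1 ω = b1 ∧ Z ω = c))))
        = ∑ c : C, ∑ b2 : B2,
          q a b1 b2 c *
            Real.log (pr p (fun ω => X ω = a ∧ Y1 ω = b1 ∧ Z ω = c) * pr p (fun ω => Z ω = c) /
              (pr p (fun ω => X ω = a ∧ Z ω = c) * pr p (fun ω => Y1 ω = b1 ∧ Z ω = c))) := by
          refine Finset.sum_congr rfl fun c _ => ?_
          rw [hexp c, Finset.sum_mul]
      _ = _ := Finset.sum_comm
  rw [e1]
  -- RHS second term
  have e2 : (∑ a : A, ∑ b2 : B2, ∑ bc : B1 × C,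
      pr p (fun ω => X ω = a ∧ Y2 ω = b2 ∧ (Y1 ω, Z ω) = bc) *
        Real.log (pr p (fun ω => X ω = a ∧ Y2 ω = b2 ∧ (Y1 ω, Z ω) = bc) *
            pr p (fun ω => (Y1 ω, Z ω) = bc) /
          (pr p (fun ω => X ω = a ∧ (Y1 ω, Z ω) = bc) *
            pr p (fun ω => Y2 ω = b2 ∧ (Y1 ω, Z ω) = bc))))
      = ∑ a : A, ∑ b1 : B1, ∑ b2 : B2, ∑ c : C,
        q a b1 b2 c *
          Real.log (q a b1 b2 c * pr p (fun ω => Y1 ω = b1 ∧ Z ω = c) /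
            (pr p (fun ω => X ω = a ∧ Y1 ω = b1 ∧ Z ω = c) *
              pr p (fun ω => (Y2 ω = b2 ∧ Y1 ω = b1) ∧ Z ω = c))) := by
    refine Finset.sum_congr rfl fun a _ => ?_
    have flat : ∀ b2 : B2, (∑ bc : B1 × C,
        pr p (fun ω => X ω = a ∧ Y2 ω = b2 ∧ (Y1 ω, Z ω) = bc) *
          Real.log (pr p (fun ω => X ω = a ∧ Y2 ω = b2 ∧ (Y1 ω, Z ω) = bc) *
              pr p (fun ω => (Y1 ω, Z ω) = bc) /
            (pr p (fun ω => X ω = a ∧ (Y1 ω, Z ω) = bc) *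
              pr p (fun ω => Y2 ω = b2 ∧ (Y1 ω, Z ω) = bc))))
        = ∑ b1 : B1, ∑ c : C,
          q a b1 b2 c *
            Real.log (q a b1 b2 c * pr p (fun ω => Y1 ω = b1 ∧ Z ω = c) /
              (pr p (fun ω => X ω = a ∧ Y1 ω = b1 ∧ Z ω = c) *
                pr p (fun ω => (Y2 ω = b2 ∧ Y1 ω = b1) ∧ Z ω = c))) := by
      intro b2
      rw [Fintype.sum_prod_type]
      refine Finset.sum_congr rfl fun b1 _ => Finset.sum_congr rfl fun c _ => ?_
      rw [hq]
      rw [pr_congr (P := fun ω => X ω = a ∧ Y2 ω = b2 ∧ (Y1 ω, Z ω) = (b1, c))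
          (Q := fun ω => X ω = a ∧ Y1 ω = b1 ∧ Y2 ω = b2 ∧ Z ω = c)
          (fun ω => by simp only [Prod.mk.injEq]; try tauto),
        pr_congr (P := fun ω => (Y1 ω, Z ω) = (b1, c))
          (Q := fun ω => Y1 ω = b1 ∧ Z ω = c)
          (fun ω => by simp only [Prod.mk.injEq]; try tauto),
        pr_congr (P := fun ω => X ω = a ∧ (Y1 ω, Z ω) = (b1, c))
          (Q := fun ω => X ω = a ∧ Y1 ω = b1 ∧ Z ω = c)
          (fun ω => by simp only [Prod.mk.injEq]; try tauto),
        pr_congr (P := fun ω => Y2 ω = b2 ∧ (Y1 ω, Z ω) = (b1, c))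
          (Q := fun ω => (Y2 ω = b2 ∧ Y1 ω = b1) ∧ Z ω = c)
          (fun ω => by simp only [Prod.mk.injEq]; try tauto)]
    rw [Finset.sum_congr rfl fun b2 _ => flat b2]
    exact Finset.sum_comm
  rw [e2]
  -- combine termwise
  rw [← Finset.sum_add_distrib]
  refine Finset.sum_congr rfl fun a _ => ?_
  rw [← Finset.sum_add_distrib]
  refine Finset.sum_congr rfl fun b1 _ => ?_
  rw [← Finset.sum_add_distrib]
  refine Finset.sum_congr rfl fun b2 _ => ?_
  rw [← Finset.sum_add_distrib]
  refine Finset.sum_congr rfl fun c _ => ?_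
  -- single term identity
  have hbb : pr p (fun ω => (Y2 ω = b2 ∧ Y1 ω = b1) ∧ Z ω = c)
      = pr p (fun ω => (Y1 ω = b1 ∧ Y2 ω = b2) ∧ Z ω = c) := pr_congr fun ω => by tauto
  rw [hbb]
  rcases (pr_nonneg (p := p) hp
      (fun ω => X ω = a ∧ Y1 ω = b1 ∧ Y2 ω = b2 ∧ Z ω = c)).eq_or_lt with h | h
  · have h' : q a b1 b2 c = 0 := h.symm
    rw [h', zero_mul, zero_mul, zero_mul, add_zero]
  · have hqpos : 0 < q a b1 b2 c := h
    have h1 : 0 < pr p (fun ω => X ω = a ∧ Y1 ω = b1 ∧ Z ω = c) :=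
      lt_of_lt_of_le hqpos (pr_mono hp fun ω hω => ⟨hω.1, hω.2.1, hω.2.2.2⟩)
    have h2 : 0 < pr p (fun ω => X ω = a ∧ Z ω = c) :=
      lt_of_lt_of_le hqpos (pr_mono hp fun ω hω => ⟨hω.1, hω.2.2.2⟩)
    have h3 : 0 < pr p (fun ω => Y1 ω = b1 ∧ Z ω = c) :=
      lt_of_lt_of_le hqpos (pr_mono hp fun ω hω => ⟨hω.2.1, hω.2.2.2⟩)
    have h4 : 0 < pr p (fun ω => (Y1 ω = b1 ∧ Y2 ω = b2) ∧ Z ω = c) :=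
      lt_of_lt_of_le hqpos (pr_mono hp fun ω hω => ⟨⟨hω.2.1, hω.2.2.1⟩, hω.2.2.2⟩)
    have h5 : 0 < pr p (fun ω => Z ω = c) :=
      lt_of_lt_of_le hqpos (pr_mono hp fun ω hω => hω.2.2.2)
    have harg : q a b1 b2 c * pr p (fun ω => Z ω = c) /
        (pr p (fun ω => X ω = a ∧ Z ω = c) * pr p (fun ω => (Y1 ω = b1 ∧ Y2 ω = b2) ∧ Z ω = c))
        = (pr p (fun ω => X ω = a ∧ Y1 ω = b1 ∧ Z ω = c) * pr p (fun ω => Z ω = c) /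
            (pr p (fun ω => X ω = a ∧ Z ω = c) * pr p (fun ω => Y1 ω = b1 ∧ Z ω = c))) *
          (q a b1 b2 c * pr p (fun ω => Y1 ω = b1 ∧ Z ω = c) /
            (pr p (fun ω => X ω = a ∧ Y1 ω = b1 ∧ Z ω = c) *
              pr p (fun ω => (Y1 ω = b1 ∧ Y2 ω = b2) ∧ Z ω = c))) := by
      field_simp
    rw [harg, Real.log_mul (by positivity) (by positivity), mul_add]
end chain

lemma sum_image_eq {C C' : Type} [Fintype C] [Fintype C'] [DecidableEq C']
    (g : C → C') (hg : Function.Injective g) (F : C' → ℝ)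
    (h0 : ∀ c' : C', (∀ c : C, g c ≠ c') → F c' = 0) :
    ∑ c' : C', F c' = ∑ c : C, F (g c) := by
  rw [← Finset.sum_image (fun x _ y _ h => hg h)]
  symm
  apply Finset.sum_subset (Finset.subset_univ _)
  intro x _ hx
  refine h0 x fun c hc => hx ?_
  exact Finset.mem_image.mpr ⟨c, Finset.mem_univ c, hc⟩

section aux2
variable {Ω A B C : Type} [Fintype Ω] [Fintype A] [Fintype B] [Fintype C]
    [DecidableEq A] [DecidableEq B] [DecidableEq C] {p : Ω → ℝ}

lemma condMI_symm (X : Ω → A) (Y : Ω → B) (Z : Ω → C) :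
    condMI p X Y Z = condMI p Y X Z := by
  rw [condMI_pr, condMI_pr, Finset.sum_comm]
  refine Finset.sum_congr rfl fun b _ => Finset.sum_congr rfl fun a _ =>
    Finset.sum_congr rfl fun c _ => ?_
  rw [pr_congr (P := fun ω => X ω = a ∧ Y ω = b ∧ Z ω = c)
      (Q := fun ω => Y ω = b ∧ X ω = a ∧ Z ω = c) (fun ω => by tauto),
    mul_comm (pr p (fun ω => X ω = a ∧ Z ω = c)) (pr p (fun ω => Y ω = b ∧ Z ω = c))]

lemma condMI_relabel_right {C' : Type} [Fintype C'] [DecidableEq C']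
    (g : C → C') (hg : Function.Injective g) (X : Ω → A) (Y : Ω → B) (Z : Ω → C) :
    condMI p X Y (fun ω => g (Z ω)) = condMI p X Y Z := by
  rw [condMI_pr, condMI_pr]
  refine Finset.sum_congr rfl fun a _ => Finset.sum_congr rfl fun b _ => ?_
  refine (sum_image_eq g hg _ ?_).trans ?_
  · intro c' hc'
    rw [pr_eq_zero (p := p) (fun ω h => hc' (Z ω) h.2.2), zero_mul]
  · refine Finset.sum_congr rfl fun c _ => ?_
    rw [pr_congr (P := fun ω => X ω = a ∧ Y ω = b ∧ g (Z ω) = g c)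
        (Q := fun ω => X ω = a ∧ Y ω = b ∧ Z ω = c) (fun ω => by simp [hg.eq_iff]),
      pr_congr (P := fun ω => g (Z ω) = g c) (Q := fun ω => Z ω = c)
        (fun ω => by simp [hg.eq_iff]),
      pr_congr (P := fun ω => X ω = a ∧ g (Z ω) = g c) (Q := fun ω => X ω = a ∧ Z ω = c)
        (fun ω => by simp [hg.eq_iff]),
      pr_congr (P := fun ω => Y ω = b ∧ g (Z ω) = g c) (Q := fun ω => Y ω = b ∧ Z ω = c)
        (fun ω => by simp [hg.eq_iff])]

lemma condMI_relabel_mid {B' : Type} [Fintype B'] [DecidableEq B']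
    (g : B → B') (hg : Function.Injective g) (X : Ω → A) (Y : Ω → B) (Z : Ω → C) :
    condMI p X (fun ω => g (Y ω)) Z = condMI p X Y Z := by
  rw [condMI_pr, condMI_pr]
  refine Finset.sum_congr rfl fun a _ => ?_
  refine (sum_image_eq g hg _ ?_).trans ?_
  · intro b' hb'
    refine Finset.sum_eq_zero fun c _ => ?_
    rw [pr_eq_zero (p := p) (fun ω h => hb' (Y ω) h.2.1), zero_mul]
  · refine Finset.sum_congr rfl fun b _ => Finset.sum_congr rfl fun c _ => ?_
    rw [pr_congr (P := fun ω => X ω = a ∧ g (Y ω) = g b ∧ Z ω = c)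
        (Q := fun ω => X ω = a ∧ Y ω = b ∧ Z ω = c) (fun ω => by simp [hg.eq_iff]),
      pr_congr (P := fun ω => g (Y ω) = g b ∧ Z ω = c) (Q := fun ω => Y ω = b ∧ Z ω = c)
        (fun ω => by simp [hg.eq_iff])]

end aux2


lemma mi_chain {Ω A B1 B2 : Type} [Fintype Ω] [Fintype A] [Fintype B1] [Fintype B2]
    [DecidableEq A] [DecidableEq B1] [DecidableEq B2] {p : Ω → ℝ}
    (hp : ∀ ω, 0 ≤ p ω) (X : Ω → A) (Y1 : Ω → B1) (Y2 : Ω → B2) :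
    mi p X (fun ω => (Y1 ω, Y2 ω)) = mi p X Y1 + condMI p X Y2 Y1 := by
  have h1 : mi p X (fun ω => (Y1 ω, Y2 ω))
      = mi p X Y1 + condMI p X Y2 (fun ω => (Y1 ω, ())) :=
    condMI_chain hp X Y1 Y2 (fun _ => ())
  have h2 : condMI p X Y2 (fun ω => (Y1 ω, ())) = condMI p X Y2 Y1 :=
    condMI_relabel_right (fun b => (b, ())) (fun x y h => congrArg Prod.fst h) X Y2 Y1
  rw [h1, h2]

theorem stmt6 {Ω A B C D : Type} [Fintype Ω] [Fintype A] [Fintype B] [Fintype C] [Fintype D]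
    [DecidableEq A] [DecidableEq B] [DecidableEq C] [DecidableEq D]
    (p : Ω → ℝ) (hp : ∀ ω, 0 ≤ p ω) (hp1 : ∑ ω : Ω, p ω = 1)
    (v1 : Ω → A) (v2 : Ω → B) (y : Ω → C) (z1 : Ω → D)
    (hrep : condMI p y z1 (fun ω => (v1 ω, v2 ω)) = 0)
    (hred : condMI p y v1 v2 = 0) :
    mi p y z1 ≥ mi p y v2 - condMI p v1 v2 z1 - condMI p y v2 v1 := by
  have h1 : mi p y (fun ω => ((v1 ω, v2 ω), z1 ω))
      = mi p y (fun ω => (v1 ω, v2 ω)) + condMI p y z1 (fun ω => (v1 ω, v2 ω)) :=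
    mi_chain hp y (fun ω => (v1 ω, v2 ω)) z1
  have h2 : mi p y (fun ω => (z1 ω, (v1 ω, v2 ω))) = mi p y (fun ω => ((v1 ω, v2 ω), z1 ω)) :=
    condMI_relabel_mid Prod.swap Prod.swap_injective y (fun ω => ((v1 ω, v2 ω), z1 ω))
      (fun _ => ())
  have h3 : mi p y (fun ω => (z1 ω, (v1 ω, v2 ω)))
      = mi p y z1 + condMI p y (fun ω => (v1 ω, v2 ω)) z1 :=
    mi_chain hp y z1 (fun ω => (v1 ω, v2 ω))
  have h4 : mi p y (fun ω => (v2 ω, v1 ω)) = mi p y v2 + condMI p y v1 v2 :=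
    mi_chain hp y v2 v1
  have h5 : mi p y (fun ω => (v2 ω, v1 ω)) = mi p y (fun ω => (v1 ω, v2 ω)) :=
    condMI_relabel_mid Prod.swap Prod.swap_injective y (fun ω => (v1 ω, v2 ω)) (fun _ => ())
  have h6 : condMI p y (fun ω => (v1 ω, v2 ω)) z1
      = condMI p y v1 z1 + condMI p y v2 (fun ω => (v1 ω, z1 ω)) :=
    condMI_chain hp y v1 v2 z1
  have h7a : condMI p v1 (fun ω => (y ω, v2 ω)) z1
      = condMI p v1 y z1 + condMI p v1 v2 (fun ω => (y ω, z1 ω)) := condMI_chain hp v1 y v2 z1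
  have h7b : condMI p v1 (fun ω => (v2 ω, y ω)) z1
      = condMI p v1 v2 z1 + condMI p v1 y (fun ω => (v2 ω, z1 ω)) := condMI_chain hp v1 v2 y z1
  have h7c : condMI p v1 (fun ω => (y ω, v2 ω)) z1 = condMI p v1 (fun ω => (v2 ω, y ω)) z1 :=
    condMI_relabel_mid Prod.swap Prod.swap_injective v1 (fun ω => (v2 ω, y ω)) z1
  have h7d : 0 ≤ condMI p v1 v2 (fun ω => (y ω, z1 ω)) := condMI_nonneg hp _ _ _
  have h7e : condMI p v1 y z1 = condMI p y v1 z1 := condMI_symm v1 y z1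
  have h8a : condMI p y (fun ω => (v1 ω, z1 ω)) v2
      = condMI p y v1 v2 + condMI p y z1 (fun ω => (v1 ω, v2 ω)) := condMI_chain hp y v1 z1 v2
  have h8b : condMI p y (fun ω => (z1 ω, v1 ω)) v2 = condMI p y (fun ω => (v1 ω, z1 ω)) v2 :=
    condMI_relabel_mid Prod.swap Prod.swap_injective y (fun ω => (v1 ω, z1 ω)) v2
  have h8c : condMI p y (fun ω => (z1 ω, v1 ω)) v2
      = condMI p y z1 v2 + condMI p y v1 (fun ω => (z1 ω, v2 ω)) := condMI_chain hp y z1 v1 v2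
  have h8d : 0 ≤ condMI p y z1 v2 := condMI_nonneg hp _ _ _
  have h8e : 0 ≤ condMI p y v1 (fun ω => (z1 ω, v2 ω)) := condMI_nonneg hp _ _ _
  have h8f : condMI p y v1 (fun ω => (z1 ω, v2 ω)) = 0 := by linarith
  have h8g : condMI p y v1 (fun ω => (v2 ω, z1 ω)) = condMI p y v1 (fun ω => (z1 ω, v2 ω)) :=
    condMI_relabel_right Prod.swap Prod.swap_injective y v1 (fun ω => (z1 ω, v2 ω))
  have h8h : condMI p v1 y (fun ω => (v2 ω, z1 ω)) = condMI p y v1 (fun ω => (v2 ω, z1 ω)) :=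
    condMI_symm v1 y _
  have h9a : condMI p y (fun ω => (v2 ω, z1 ω)) v1
      = condMI p y v2 v1 + condMI p y z1 (fun ω => (v2 ω, v1 ω)) := condMI_chain hp y v2 z1 v1
  have h9b : condMI p y (fun ω => (z1 ω, v2 ω)) v1
      = condMI p y z1 v1 + condMI p y v2 (fun ω => (z1 ω, v1 ω)) := condMI_chain hp y z1 v2 v1
  have h9c : condMI p y (fun ω => (v2 ω, z1 ω)) v1 = condMI p y (fun ω => (z1 ω, v2 ω)) v1 :=
    condMI_relabel_mid Prod.swap Prod.swap_injective y (fun ω => (z1 ω, v2 ω)) v1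
  have h9d : condMI p y z1 (fun ω => (v2 ω, v1 ω)) = condMI p y z1 (fun ω => (v1 ω, v2 ω)) :=
    condMI_relabel_right Prod.swap Prod.swap_injective y z1 (fun ω => (v1 ω, v2 ω))
  have h9e : 0 ≤ condMI p y z1 v1 := condMI_nonneg hp _ _ _
  have h9f : condMI p y v2 (fun ω => (v1 ω, z1 ω)) = condMI p y v2 (fun ω => (z1 ω, v1 ω)) :=
    condMI_relabel_right Prod.swap Prod.swap_injective y v2 (fun ω => (z1 ω, v1 ω))
  linarith
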